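/- Let Δ be a d_1-convex union representable simplicial complex, and let Γ be a d_2-representable simplicial complex on a vertex set disjoint from that of Δ. Then the join Δ * Γ = {σ ∪ τ : σ ∈ Δ, τ ∈ Γ} is (d_1 + d_2)-convex union representable. -/

import Mathlib

open Set

/-- An abstract simplicial complex on ground set `V`: a collection of finite
subsets of `V` that is closed under inclusion. -/
def IsSimplicialComplex {V : Type*} (Δ : Set (Finset V)) : Prop :=
  ∀ σ ∈ Δ, ∀ τ : Finset V, τ ⊆ σ → τ ∈ Δ

/-- The nerve of a collection of sets `U i`: the faces are the finite sets `σ`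
of indices such that `⋂ i ∈ σ, U i ≠ ∅`, where by convention the empty face
belongs to the nerve iff some `U i` is nonempty. -/
def nerveOf {V E : Type*} (U : V → Set E) : Set (Finset V) :=
  {σ | (∃ i, (U i).Nonempty) ∧ ∃ x, ∀ i ∈ σ, x ∈ U i}

/-- A facet of `Δ` is an inclusion-maximal face. -/
def IsFacet {V : Type*} (Δ : Set (Finset V)) (σ : Finset V) : Prop :=
  σ ∈ Δ ∧ ∀ τ ∈ Δ, σ ⊆ τ → τ = σ

/-- A free face of `Δ`: a face that is not a facet and is contained in a
unique facet. -/
def IsFreeFace {V : Type*} (Δ : Set (Finset V)) (σ : Finset V) : Prop :=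
  σ ∈ Δ ∧ ¬ IsFacet Δ σ ∧ ∃! τ : Finset V, IsFacet Δ τ ∧ σ ⊆ τ

/-- An elementary collapse removes from `Δ` all faces containing a free face. -/
def ElemCollapse {V : Type*} (Δ Γ : Set (Finset V)) : Prop :=
  ∃ σ : Finset V, IsFreeFace Δ σ ∧ Γ = {τ ∈ Δ | ¬ σ ⊆ τ}

/-- `Δ` collapses onto `Γ` if a (finite) sequence of elementary collapses
leads from `Δ` to `Γ`. -/
def CollapsesTo {V : Type*} (Δ Γ : Set (Finset V)) : Prop :=
  Relation.ReflTransGen ElemCollapse Δ Γ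

/-- `Δ` is collapsible if it collapses onto the void complex. -/
def Collapsible {V : Type*} (Δ : Set (Finset V)) : Prop :=
  CollapsesTo Δ (∅ : Set (Finset V))

/-- Euclidean space `ℝ^d`. -/
abbrev Euc (d : ℕ) : Type := EuclideanSpace ℝ (Fin d)

/-- `U` is a `d`-convex union representation of `Δ`: the `U i` are convex open
sets in `ℝ^d`, their union is convex, and their nerve is `Δ`. -/
def IsCURep {V : Type*} {d : ℕ} (U : V → Set (Euc d)) (Δ : Set (Finset V)) : Prop :=
  (∀ i, Convex ℝ (U i)) ∧ (∀ i, IsOpen (U i)) ∧ Convex ℝ (⋃ i, U i) ∧ nerveOf U = Δ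

/-- `Δ` is `d`-convex union representable. -/
def IsCUR {V : Type*} (d : ℕ) (Δ : Set (Finset V)) : Prop :=
  ∃ U : V → Set (Euc d), IsCURep U Δ

/-- `Δ` is convex union representable: `d`-convex union representable for some `d`. -/
def ConvexUnionRepresentable {V : Type*} (Δ : Set (Finset V)) : Prop :=
  ∃ d : ℕ, IsCUR d Δ

/-- `Δ` is `d`-representable: the nerve of a family of convex sets in `ℝ^d`. -/
def IsRep {V : Type*} (d : ℕ) (Δ : Set (Finset V)) : Prop :=
  ∃ U : V → Set (Euc d), (∀ i, Convex ℝ (U i)) ∧ nerveOf U = Δ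

/-- The join of two complexes on disjoint vertex sets:
`Δ * Γ = {σ ∪ τ : σ ∈ Δ, τ ∈ Γ}`. -/
def joinCplx {V W : Type*} [DecidableEq V] [DecidableEq W]
    (Δ : Set (Finset V)) (Γ : Set (Finset W)) : Set (Finset (V ⊕ W)) :=
  {σ | ∃ τ₁ ∈ Δ, ∃ τ₂ ∈ Γ, σ = τ₁.image Sum.inl ∪ τ₂.image Sum.inr}

section Aux

open Metric

set_option maxHeartbeats 1000000 in
/-- Any nerve of convex sets (with some set nonempty) can be realized, up to having the
same nerve-intersection pattern, by open convex sets in the same dimension. -/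
lemma exists_open_rep {n d : ℕ} (W : Fin n → Set (Euc d))
    (hconv : ∀ j, Convex ℝ (W j)) (hne : ∃ j, (W j).Nonempty) :
    ∃ T : Fin n → Set (Euc d), (∀ j, Convex ℝ (T j)) ∧ (∀ j, IsOpen (T j)) ∧
      (∀ σ : Finset (Fin n), σ ∈ nerveOf W → ∃ x, ∀ j ∈ σ, x ∈ T j) ∧
      (∀ σ : Finset (Fin n), (∃ x, ∀ j ∈ σ, x ∈ T j) → σ ∈ nerveOf W) := by
  classical
  have hwit : ∀ σ : Finset (Fin n), ∃ x : Euc d, σ ∈ nerveOf W → ∀ j ∈ σ, x ∈ W j := by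
    intro σ
    by_cases h : σ ∈ nerveOf W
    · obtain ⟨x, hx⟩ := h.2
      exact ⟨x, fun _ => hx⟩
    · exact ⟨0, fun h' => absurd h' h⟩
  choose p hp using hwit
  set K : Fin n → Set (Euc d) := fun j =>
    convexHull ℝ (p '' {σ | σ ∈ nerveOf W ∧ j ∈ σ}) with hK_def
  have hKconv : ∀ j, Convex ℝ (K j) := fun j => convex_convexHull ℝ _
  have hKcpt : ∀ j, IsCompact (K j) :=
    fun j => ((Set.toFinite _).image p).isCompact_convexHull (𝕜 := ℝ)
  have hKW : ∀ j, K j ⊆ W j := by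
    intro j
    apply convexHull_min _ (hconv j)
    rintro _ ⟨σ, ⟨hσ, hj⟩, rfl⟩
    exact hp σ hσ j hj
  have hmemK : ∀ σ (hσ : σ ∈ nerveOf W), ∀ j ∈ σ, p σ ∈ K j := by
    intro σ hσ j hj
    exact subset_convexHull ℝ _ ⟨σ, ⟨hσ, hj⟩, rfl⟩
  have key : ∀ σ : Finset (Fin n), ∃ ε : ℝ, 0 < ε ∧
      ((∃ x, ∀ j ∈ σ, x ∈ thickening ε (K j)) → σ ∈ nerveOf W) := by
    intro σ
    by_cases hσ : σ ∈ nerveOf W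
    · exact ⟨1, one_pos, fun _ => hσ⟩
    by_cases hKne : ∀ j ∈ σ, (K j).Nonempty
    swap
    · push_neg at hKne
      obtain ⟨j, hj, hKj⟩ := hKne
      rw [← Set.not_nonempty_iff_eq_empty] at hKj
      rw [Set.not_nonempty_iff_eq_empty] at hKj
      refine ⟨1, one_pos, ?_⟩
      rintro ⟨x, hx⟩
      have h0 := hx j hj
      rw [hKj, Metric.thickening_empty] at h0
      exact absurd h0 (Set.notMem_empty x)
    have hσne : σ.Nonempty := by
      rcases Finset.eq_empty_or_nonempty σ with rfl | h
      · exact absurd ⟨hne, ⟨0, by simp⟩⟩ hσ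
      · exact h
    obtain ⟨j₀, hj₀⟩ := hσne
    set f : Euc d → ℝ := fun y => ∑ j ∈ σ, infDist y (K j) with hf_def
    have hfc : Continuous f := by
      apply continuous_finset_sum
      intro j _
      exact continuous_infDist_pt (K j)
    obtain ⟨y₀, hy₀K, hy₀min⟩ :=
      (hKcpt j₀).exists_isMinOn (hKne j₀ hj₀) hfc.continuousOn
    have hm : 0 < f y₀ := by
      rcases lt_or_ge 0 (f y₀) with h | h
      · exact h
      exfalso
      have h1 : ∀ j ∈ σ, 0 ≤ infDist y₀ (K j) := fun _ _ => infDist_nonneg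
      have hzero : ∀ j ∈ σ, infDist y₀ (K j) = 0 :=
        (Finset.sum_eq_zero_iff_of_nonneg h1).mp (le_antisymm h (Finset.sum_nonneg h1))
      have hy₀W : ∀ j ∈ σ, y₀ ∈ W j := fun j hj =>
        hKW j (((hKcpt j).isClosed.mem_iff_infDist_zero (hKne j hj)).mpr (hzero j hj))
      exact hσ ⟨hne, y₀, hy₀W⟩
    set c : ℝ := (σ.card : ℝ) with hc_def
    have hc0 : 0 < c := by
      rw [hc_def]
      exact_mod_cast Finset.card_pos.mpr ⟨j₀, hj₀⟩
    have hden : (0:ℝ) < 2 * c + 1 := by linarith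
    refine ⟨f y₀ / (2 * c + 1), div_pos hm hden, ?_⟩
    rintro ⟨x, hx⟩
    exfalso
    set ε : ℝ := f y₀ / (2 * c + 1) with hε_def
    have hεpos : 0 < ε := div_pos hm hden
    have hεm : (2 * c + 1) * ε = f y₀ := by
      rw [hε_def, mul_comm]
      exact div_mul_cancel₀ _ (ne_of_gt hden)
    have hdist : ∀ j ∈ σ, infDist x (K j) < ε := by
      intro j hj
      obtain ⟨z, hz, hdz⟩ := Metric.mem_thickening_iff.mp (hx j hj)
      exact lt_of_le_of_lt (infDist_le_dist_of_mem hz) hdz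
    obtain ⟨y, hy, hxy⟩ := Metric.mem_thickening_iff.mp (hx j₀ hj₀)
    have hbound : ∀ j ∈ σ, infDist y (K j) < 2 * ε := by
      intro j hj
      have h2 : infDist y (K j) ≤ infDist x (K j) + dist y x := infDist_le_infDist_add_dist
      have h3 := hdist j hj
      rw [dist_comm] at hxy
      linarith
    have hfy : f y < c * (2 * ε) := by
      have h4 : f y < ∑ _j ∈ σ, 2 * ε := Finset.sum_lt_sum_of_nonempty ⟨j₀, hj₀⟩ hbound
      have h5 : ∑ _j ∈ σ, 2 * ε = c * (2 * ε) := by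
        rw [Finset.sum_const, hc_def, nsmul_eq_mul]
      linarith
    have hmin : f y₀ ≤ f y := hy₀min hy
    nlinarith
  choose e he1 he2 using key
  have huniv : (Finset.univ : Finset (Finset (Fin n))).Nonempty := ⟨∅, Finset.mem_univ _⟩
  set ε₀ : ℝ := Finset.univ.inf' huniv e with hε₀_def
  have hε₀pos : 0 < ε₀ := by
    rw [hε₀_def, Finset.lt_inf'_iff]
    exact fun σ _ => he1 σ
  refine ⟨fun j => thickening ε₀ (K j), fun j => (hKconv j).thickening ε₀,
    fun j => isOpen_thickening, ?_, ?_⟩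
  · intro σ hσ
    exact ⟨p σ, fun j hj => self_subset_thickening hε₀pos _ (hmemK σ hσ j hj)⟩
  · rintro σ ⟨x, hx⟩
    refine he2 σ ⟨x, fun j hj => ?_⟩
    exact thickening_mono (Finset.inf'_le e (Finset.mem_univ σ)) (K j) (hx j hj)

/-- Projection `ℝ^{d₁+d₂} → ℝ^{d₁}` onto the first block of coordinates. -/
noncomputable def projL (d₁ d₂ : ℕ) : Euc (d₁ + d₂) →L[ℝ] Euc d₁ :=
  ((EuclideanSpace.equiv (Fin d₁) ℝ).symm :
      (Fin d₁ → ℝ) →L[ℝ] Euc d₁).comp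
    (ContinuousLinearMap.pi fun i : Fin d₁ => EuclideanSpace.proj (Fin.castAdd d₂ i))

/-- Projection `ℝ^{d₁+d₂} → ℝ^{d₂}` onto the second block of coordinates. -/
noncomputable def projR (d₁ d₂ : ℕ) : Euc (d₁ + d₂) →L[ℝ] Euc d₂ :=
  ((EuclideanSpace.equiv (Fin d₂) ℝ).symm :
      (Fin d₂ → ℝ) →L[ℝ] Euc d₂).comp
    (ContinuousLinearMap.pi fun i : Fin d₂ => EuclideanSpace.proj (Fin.natAdd d₁ i))

/-- Glue a vector of `ℝ^{d₁}` and a vector of `ℝ^{d₂}` to one of `ℝ^{d₁+d₂}`. -/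
noncomputable def glueE {d₁ d₂ : ℕ} (x : Euc d₁) (y : Euc d₂) : Euc (d₁ + d₂) :=
  (EuclideanSpace.equiv (Fin (d₁ + d₂)) ℝ).symm
    (Fin.addCases (motive := fun _ => ℝ) (fun i => x i) (fun j => y j))

lemma projL_glueE {d₁ d₂ : ℕ} (x : Euc d₁) (y : Euc d₂) : projL d₁ d₂ (glueE x y) = x := by
  ext i
  show Fin.addCases (motive := fun _ => ℝ) (fun i => x i) (fun j => y j) (Fin.castAdd d₂ i) = x i
  exact Fin.addCases_left i

lemma projR_glueE {d₁ d₂ : ℕ} (x : Euc d₁) (y : Euc d₂) : projR d₁ d₂ (glueE x y) = y := by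
  ext j
  show Fin.addCases (motive := fun _ => ℝ) (fun i => x i) (fun j => y j) (Fin.natAdd d₁ j) = y j
  exact Fin.addCases_right j

lemma convex_preimage_clm {E F : Type*} [NormedAddCommGroup E] [NormedSpace ℝ E]
    [NormedAddCommGroup F] [NormedSpace ℝ F] (f : E →L[ℝ] F) {s : Set F}
    (hs : Convex ℝ s) : Convex ℝ (f ⁻¹' s) := by
  simpa using hs.linear_preimage (f : E →ₗ[ℝ] F)

end Aux

set_option maxHeartbeats 1000000 in
/-- **Proposition.** If `Δ` is `d₁`-convex union representable and `Γ` is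
`d₂`-representable, then the join `Δ * Γ` is `(d₁ + d₂)`-convex union
representable. -/
theorem join_CUR {n₁ n₂ d₁ d₂ : ℕ}
    (Δ : Set (Finset (Fin n₁))) (Γ : Set (Finset (Fin n₂)))
    (hΔ : IsSimplicialComplex Δ) (hΓ : IsSimplicialComplex Γ)
    (hcur : IsCUR d₁ Δ) (hrep : IsRep d₂ Γ) :
    IsCUR (d₁ + d₂) (joinCplx Δ Γ) := by
  classical
  obtain ⟨U, hUconv, hUopen, hUuconv, hUnerve⟩ := hcur
  obtain ⟨W, hWconv, hWnerve⟩ := hrep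
  by_cases hΓ0 : ∃ j, (W j).Nonempty
  · obtain ⟨T, hTconv, hTopen, hTfwd, hTbwd⟩ := exists_open_rep W hWconv hΓ0
    set π₁ := projL d₁ d₂ with hπ₁
    set π₂ := projR d₁ d₂ with hπ₂
    set A : Fin n₁ → Set (Euc (d₁ + d₂)) := fun i => π₁ ⁻¹' (U i) with hA
    set B : Fin n₂ → Set (Euc (d₁ + d₂)) :=
      fun j => π₁ ⁻¹' (⋃ i, U i) ∩ π₂ ⁻¹' (T j) with hB
    refine ⟨Sum.elim A B, ?_, ?_, ?_, ?_⟩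
    · rintro (i | j)
      · exact convex_preimage_clm π₁ (hUconv i)
      · exact (convex_preimage_clm π₁ hUuconv).inter (convex_preimage_clm π₂ (hTconv j))
    · rintro (i | j)
      · exact (hUopen i).preimage π₁.continuous
      · exact ((isOpen_iUnion hUopen).preimage π₁.continuous).inter
          ((hTopen j).preimage π₂.continuous)
    · have hunion : ⋃ k, Sum.elim A B k = π₁ ⁻¹' (⋃ i, U i) := by
        apply subset_antisymm
        · rw [iUnion_sum]
          simp only [Sum.elim_inl, Sum.elim_inr]
          apply union_subset
          · exact iUnion_subset fun i => preimage_mono (subset_iUnion U i)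
          · exact iUnion_subset fun j => inter_subset_left
        · rw [preimage_iUnion]
          exact iUnion_subset fun i => (subset_iUnion (fun k => Sum.elim A B k) (Sum.inl i))
      rw [hunion]
      exact convex_preimage_clm π₁ hUuconv
    · ext σ
      constructor
      · rintro ⟨⟨k, hk⟩, x, hx⟩
        have hUne : ∃ i, (U i).Nonempty := by
          rcases k with i | j
          · obtain ⟨x', hx'⟩ := hk
            exact ⟨i, ⟨π₁ x', hx'⟩⟩
          · obtain ⟨x', hx'⟩ := hk
            have h1 := hx'.1
            rw [mem_preimage, mem_iUnion] at h1
            obtain ⟨i, hi⟩ := h1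
            exact ⟨i, ⟨_, hi⟩⟩
        set σ₁ := σ.preimage Sum.inl Sum.inl_injective.injOn with hσ₁
        set σ₂ := σ.preimage Sum.inr Sum.inr_injective.injOn with hσ₂
        refine ⟨σ₁, ?_, σ₂, ?_, ?_⟩
        · rw [← hUnerve]
          exact ⟨hUne, π₁ x, fun i hi => hx (Sum.inl i) (Finset.mem_preimage.mp hi)⟩
        · rw [← hWnerve]
          exact hTbwd σ₂
            ⟨π₂ x, fun j hj => (hx (Sum.inr j) (Finset.mem_preimage.mp hj)).2⟩
        · ext k
          rcases k with i | j <;>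
            simp [hσ₁, hσ₂, Finset.mem_union, Finset.mem_image, Finset.mem_preimage]
      · rintro ⟨σ₁, hσ₁, σ₂, hσ₂, rfl⟩
        rw [← hUnerve] at hσ₁
        obtain ⟨⟨i₀, hi₀⟩, x₁, hx₁⟩ := hσ₁
        rw [← hWnerve] at hσ₂
        obtain ⟨x₂, hx₂⟩ := hTfwd σ₂ hσ₂
        obtain ⟨z, hz, hzu⟩ : ∃ z, (∀ i ∈ σ₁, z ∈ U i) ∧ z ∈ ⋃ i, U i := by
          rcases Finset.eq_empty_or_nonempty σ₁ with rfl | ⟨i, hi⟩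
          · obtain ⟨z, hz⟩ := hi₀
            exact ⟨z, by simp, mem_iUnion.mpr ⟨i₀, hz⟩⟩
          · exact ⟨x₁, hx₁, mem_iUnion.mpr ⟨i, hx₁ i hi⟩⟩
        refine ⟨⟨Sum.inl i₀, ?_⟩, glueE z x₂, ?_⟩
        · obtain ⟨w, hw⟩ := hi₀
          refine ⟨glueE w x₂, ?_⟩
          show glueE w x₂ ∈ A i₀
          rw [hA]
          simp only [mem_preimage, hπ₁, projL_glueE]
          exact hw
        · intro k hk
          rcases k with i | j
          · have hi : i ∈ σ₁ := by
              simp only [Finset.mem_union, Finset.mem_image] at hk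
              rcases hk with ⟨a, ha, hae⟩ | ⟨a, _, hae⟩
              · cases hae
                exact ha
              · exact absurd hae (by simp)
            show glueE z x₂ ∈ A i
            rw [hA]
            simp only [mem_preimage, hπ₁, projL_glueE]
            exact hz i hi
          · have hj : j ∈ σ₂ := by
              simp only [Finset.mem_union, Finset.mem_image] at hk
              rcases hk with ⟨a, _, hae⟩ | ⟨a, ha, hae⟩
              · exact absurd hae (by simp)
              · cases hae
                exact ha
            show glueE z x₂ ∈ B j
            rw [hB]
            constructor
            · simp only [mem_preimage, hπ₁, projL_glueE]
              exact hzu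
            · simp only [mem_preimage, hπ₂, projR_glueE]
              exact hx₂ j hj
  · have hΓempty : Γ = ∅ := by
      rw [← hWnerve]
      ext σ
      simp only [nerveOf, mem_setOf_eq, mem_empty_iff_false, iff_false, not_and]
      intro h
      exact absurd h hΓ0
    refine ⟨fun _ => ∅, fun _ => convex_empty, fun _ => isOpen_empty, by rw [Set.iUnion_empty]; exact convex_empty, ?_⟩
    have h1 : nerveOf (fun _ : Fin n₁ ⊕ Fin n₂ => (∅ : Set (Euc (d₁ + d₂)))) = ∅ := by
      ext σ
      simp [nerveOf]
    rw [h1]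
    ext σ
    simp [joinCplx, hΓempty]
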